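/- Let ν > 0 and define K(ν,z) := ∫₀^∞ exp(−z·cosh t)·cosh(ν·t) dt for z > 0. Then z^ν · K(ν,z) tends to 2^(ν−1)·Γ(ν) as z → 0 from the right, where Γ is the real Gamma function. -/

import Mathlib

open Set Filter MeasureTheory Real

noncomputable def besselK (ν z : ℝ) : ℝ :=
  ∫ t in Set.Ioi (0 : ℝ), Real.exp (-z * Real.cosh t) * Real.cosh (ν * t)

/-- the substituted integrand -/
noncomputable def gfun (ν z x : ℝ) : ℝ :=
  (2:ℝ)^(ν-1) * (Real.exp (-x - z^2/(4*x)) * (x^(ν-1) + (z/2)^(2*ν) * x^(-ν-1)))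

lemma image_eq {z : ℝ} (hz : 0 < z) :
    (fun t => z/2 * Real.exp t) '' Ioi (0:ℝ) = Ioi (z/2) := by
  ext x
  constructor
  · rintro ⟨t, ht, rfl⟩
    have h1 : (1:ℝ) < Real.exp t := by
      calc (1:ℝ) = Real.exp 0 := Real.exp_zero.symm
        _ < Real.exp t := Real.exp_lt_exp.mpr ht
    have : z/2 * 1 < z/2 * Real.exp t := by
      apply mul_lt_mul_of_pos_left h1 (by linarith)
    simpa using this
  · intro hx
    have hx' : (0:ℝ) < x := lt_trans (by linarith) hx
    have h2 : (1:ℝ) < x / (z/2) := (one_lt_div (by linarith)).mpr hx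
    refine ⟨Real.log (x / (z/2)), Real.log_pos h2, ?_⟩
    show z / 2 * Real.exp (Real.log (x / (z/2))) = x
    rw [Real.exp_log (by positivity)]
    field_simp

lemma pointwise_eq (ν : ℝ) {z : ℝ} (hz : 0 < z) (t : ℝ) :
    |z/2 * Real.exp t| • gfun ν z (z/2 * Real.exp t)
      = z ^ ν * (Real.exp (-z * Real.cosh t) * Real.cosh (ν * t)) := by
  set x := z/2 * Real.exp t with hxdef
  have hx : 0 < x := by positivity
  have habs : |x| = x := abs_of_pos hx
  have he : Real.exp t ≠ 0 := (Real.exp_pos t).ne'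
  have hexp : -x - z^2/(4*x) = -z * Real.cosh t := by
    rw [Real.cosh_eq, hxdef, Real.exp_neg]
    field_simp
    ring
  have hxν : x ^ ν = (z/2)^ν * Real.exp (ν * t) := by
    rw [hxdef, Real.mul_rpow (by positivity) (le_of_lt (Real.exp_pos t)),
      Real.rpow_def_of_pos (Real.exp_pos t), Real.log_exp, mul_comm t ν]
  have hxmν : x ^ (-ν) = (z/2)^(-ν) * Real.exp (-(ν * t)) := by
    rw [hxdef, Real.mul_rpow (by positivity) (le_of_lt (Real.exp_pos t)),
      Real.rpow_def_of_pos (Real.exp_pos t), Real.log_exp, mul_comm t (-ν), neg_mul]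
  have h1 : x * x ^ (ν-1) = x ^ ν := by
    calc x * x ^ (ν-1) = x ^ (1:ℝ) * x ^ (ν-1) := by rw [Real.rpow_one]
      _ = x ^ (1 + (ν-1)) := (Real.rpow_add hx _ _).symm
      _ = x ^ ν := by ring_nf
  have h2 : x * x ^ (-ν-1) = x ^ (-ν) := by
    calc x * x ^ (-ν-1) = x ^ (1:ℝ) * x ^ (-ν-1) := by rw [Real.rpow_one]
      _ = x ^ (1 + (-ν-1)) := (Real.rpow_add hx _ _).symm
      _ = x ^ (-ν) := by ring_nf
  have hc : (z/2)^(2*ν) * (z/2)^(-ν) = (z/2)^ν := by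
    rw [← Real.rpow_add (by positivity)]; ring_nf
  have hsum : x * (x^(ν-1) + (z/2)^(2*ν) * x^(-ν-1))
      = (z/2)^ν * (Real.exp (ν*t) + Real.exp (-(ν*t))) := by
    linear_combination h1 + hxν + (z/2)^(2*ν) * h2 + (z/2)^(2*ν) * hxmν
      + Real.exp (-(ν*t)) * hc
  have hz2 : (2:ℝ)^(ν-1) * (z/2)^ν = z^ν / 2 := by
    have h2ν : (0:ℝ) < (2:ℝ)^ν := Real.rpow_pos_of_pos two_pos ν
    rw [Real.rpow_sub (by norm_num), Real.rpow_one,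
      Real.div_rpow (le_of_lt hz) (by norm_num)]
    field_simp
  rw [habs, smul_eq_mul]
  calc x * gfun ν z x
      = (2:ℝ)^(ν-1) * (Real.exp (-z * Real.cosh t)
          * (x * (x^(ν-1) + (z/2)^(2*ν) * x^(-ν-1)))) := by
        unfold gfun; rw [hexp]; ring
    _ = (2:ℝ)^(ν-1) * (Real.exp (-z * Real.cosh t)
          * ((z/2)^ν * (Real.exp (ν*t) + Real.exp (-(ν*t))))) := by rw [hsum]
    _ = z ^ ν * (Real.exp (-z * Real.cosh t) * Real.cosh (ν * t)) := by
        rw [Real.cosh_eq (ν*t)]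
        linear_combination (Real.exp (-z * Real.cosh t)
          * (Real.exp (ν*t) + Real.exp (-(ν*t)))) * hz2

lemma subst_eq (ν : ℝ) {z : ℝ} (hz : 0 < z) :
    z ^ ν * besselK ν z = ∫ x in Ioi (z/2), gfun ν z x := by
  have hderiv : ∀ t ∈ Ioi (0:ℝ),
      HasDerivWithinAt (fun t => z/2 * Real.exp t) (z/2 * Real.exp t) (Ioi 0) t :=
    fun t _ => ((Real.hasDerivAt_exp t).const_mul (z/2)).hasDerivWithinAt
  have hinj : InjOn (fun t => z/2 * Real.exp t) (Ioi 0) := by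
    intro a _ b _ h
    exact Real.exp_injective (mul_left_cancel₀ (by positivity : (z:ℝ)/2 ≠ 0) h)
  rw [besselK, ← MeasureTheory.integral_const_mul, ← image_eq hz,
    MeasureTheory.integral_image_eq_integral_abs_deriv_smul measurableSet_Ioi hderiv hinj]
  apply MeasureTheory.setIntegral_congr_fun measurableSet_Ioi
  intro t _
  exact (pointwise_eq ν hz t).symm

theorem stmt7 (ν : ℝ) (hν : 0 < ν) :
    Tendsto (fun z : ℝ => z ^ ν * besselK ν z)
      (nhdsWithin 0 (Ioi (0 : ℝ)))
      (nhds ((2 : ℝ) ^ (ν - 1) * Real.Gamma ν)) := by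
  have h2ν : (0:ℝ) < 2*ν := by linarith
  have hΓ : (2:ℝ)^(ν-1) * Real.Gamma ν
      = ∫ x in Ioi (0:ℝ), (2:ℝ)^(ν-1) * (Real.exp (-x) * x^(ν-1)) := by
    rw [Real.Gamma_eq_integral hν, ← MeasureTheory.integral_const_mul]
  have hbound_int : Integrable
      (fun x => (2:ℝ)^(ν-1) * (2 * (Real.exp (-x) * x^(ν-1))))
      (volume.restrict (Ioi 0)) :=
    ((Real.GammaIntegral_convergent hν).const_mul 2).const_mul _
  have key : Tendsto
      (fun z => ∫ x in Ioi (0:ℝ), indicator (Ioi (z/2)) (gfun ν z) x)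
      (nhdsWithin 0 (Ioi (0:ℝ)))
      (nhds (∫ x in Ioi (0:ℝ), (2:ℝ)^(ν-1) * (Real.exp (-x) * x^(ν-1)))) := by
    apply tendsto_integral_filter_of_dominated_convergence
      (bound := fun x => (2:ℝ)^(ν-1) * (2 * (Real.exp (-x) * x^(ν-1))))
    · filter_upwards [self_mem_nhdsWithin] with z _
      apply AEStronglyMeasurable.indicator _ measurableSet_Ioi
      apply Measurable.aestronglyMeasurable
      unfold gfun
      fun_prop
    · filter_upwards [self_mem_nhdsWithin] with z hz
      rw [ae_restrict_iff' measurableSet_Ioi]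
      apply ae_of_all
      intro x hx
      have hx0 : (0:ℝ) < x := hx
      have hz0 : (0:ℝ) < z := hz
      by_cases hxz : x ∈ Ioi (z/2)
      · rw [indicator_of_mem hxz]
        have e1 : Real.exp (-x - z^2/(4*x)) ≤ Real.exp (-x) := by
          apply Real.exp_le_exp.mpr
          have : (0:ℝ) ≤ z^2/(4*x) := by positivity
          linarith
        have e2 : (z/2)^(2*ν) * x^(-ν-1) ≤ x^(ν-1) := by
          have h3 : (z/2)^(2*ν) ≤ x^(2*ν) :=
            Real.rpow_le_rpow (by positivity) (le_of_lt hxz) (le_of_lt h2ν)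
          have h4 : x^(2*ν) * x^(-ν-1) = x^(ν-1) := by
            rw [← Real.rpow_add hx0]; ring_nf
          calc (z/2)^(2*ν) * x^(-ν-1) ≤ x^(2*ν) * x^(-ν-1) :=
                mul_le_mul_of_nonneg_right h3 (by positivity)
            _ = x^(ν-1) := h4
        rw [Real.norm_eq_abs, abs_of_nonneg (by unfold gfun; positivity)]
        unfold gfun
        calc (2:ℝ)^(ν-1) * (Real.exp (-x - z^2/(4*x)) * (x^(ν-1) + (z/2)^(2*ν) * x^(-ν-1)))
            ≤ (2:ℝ)^(ν-1) * (Real.exp (-x) * (x^(ν-1) + x^(ν-1))) := by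
              apply mul_le_mul_of_nonneg_left _ (by positivity)
              apply mul_le_mul e1 (by linarith) (by positivity) (by positivity)
          _ = (2:ℝ)^(ν-1) * (2 * (Real.exp (-x) * x^(ν-1))) := by ring
      · rw [indicator_of_notMem hxz]
        simp only [norm_zero]
        positivity
    · exact hbound_int
    · rw [ae_restrict_iff' measurableSet_Ioi]
      apply ae_of_all
      intro x hx
      have hx0 : (0:ℝ) < x := hx
      have hev : (fun z => gfun ν z x)
          =ᶠ[nhdsWithin 0 (Ioi (0:ℝ))] fun z => indicator (Ioi (z/2)) (gfun ν z) x := by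
        filter_upwards [Ioo_mem_nhdsGT_of_mem (left_mem_Ico.mpr hx0)] with z hz
        exact (indicator_of_mem (by simp only [mem_Ioi]; linarith [hz.1, hz.2]) _).symm
      apply Tendsto.congr' hev
      have t1 : Tendsto (fun z:ℝ => Real.exp (-x - z^2/(4*x)))
          (nhdsWithin 0 (Ioi (0:ℝ))) (nhds (Real.exp (-x))) := by
        have hc : Continuous (fun z:ℝ => Real.exp (-x - z^2/(4*x))) := by fun_prop
        exact (hc.tendsto' 0 (Real.exp (-x)) (by norm_num)).mono_left
          (nhdsWithin_le_nhds (s := Ioi (0:ℝ)))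
      have t2 : Tendsto (fun z:ℝ => ((z/2):ℝ)^(2*ν))
          (nhdsWithin 0 (Ioi (0:ℝ))) (nhds 0) := by
        have hc : ContinuousAt (fun y:ℝ => y^(2*ν)) 0 :=
          Real.continuousAt_rpow_const 0 (2*ν) (Or.inr h2ν.le)
        have hd : Tendsto (fun z:ℝ => z/2) (nhdsWithin 0 (Ioi (0:ℝ))) (nhds 0) := by
          have := ((continuous_id.div_const 2).tendsto (0:ℝ)).mono_left
            (nhdsWithin_le_nhds (s := Ioi (0:ℝ)))
          simpa using this
        have := hc.tendsto.comp hd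
        simpa [Function.comp_def, Real.zero_rpow (ne_of_gt h2ν)] using this
      have t3 : Tendsto (fun z:ℝ => x^(ν-1) + (z/2)^(2*ν) * x^(-ν-1))
          (nhdsWithin 0 (Ioi (0:ℝ))) (nhds (x^(ν-1) + 0 * x^(-ν-1))) :=
        tendsto_const_nhds.add (t2.mul_const _)
      have := (t1.mul t3).const_mul ((2:ℝ)^(ν-1))
      simpa [gfun] using this
  have hcongr : (fun z => ∫ x in Ioi (0:ℝ), indicator (Ioi (z/2)) (gfun ν z) x)
      =ᶠ[nhdsWithin 0 (Ioi (0:ℝ))] fun z => z^ν * besselK ν z := by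
    filter_upwards [self_mem_nhdsWithin] with z hz
    have hz0 : (0:ℝ) < z := hz
    rw [subst_eq ν hz, MeasureTheory.integral_indicator measurableSet_Ioi,
      MeasureTheory.Measure.restrict_restrict measurableSet_Ioi, Ioi_inter_Ioi,
      max_eq_left (by linarith : (0:ℝ) ≤ z/2)]
  rw [hΓ]
  exact Tendsto.congr' hcongr key
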